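/- For any sequence (ψ_k) in a Hilbert space H, the adjoint of the synthesis operator D equals the analysis operator C, i.e., D* = C (with equality of domains). -/

import Mathlib

open Filter Topology
open scoped ComplexInnerProductSpace

private lemma stmt6_aux {H : Type*} [NormedAddCommGroup H] [InnerProductSpace ℂ H]
    [CompleteSpace H] (ψ : ℕ → H) (f : H) (g : lp (fun _ : ℕ => ℂ) 2)
    (hg : ∀ (c : lp (fun _ : ℕ => ℂ) 2) (s : H),
          Tendsto (fun n => ∑ k ∈ Finset.range n, (c : ℕ → ℂ) k • ψ k) atTop (𝓝 s) →
          ⟪s, f⟫ = ⟪c, g⟫) :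
    ∀ k : ℕ, (g : ℕ → ℂ) k = ⟪ψ k, f⟫ := by
  intro k
  have hts : Tendsto (fun n => ∑ j ∈ Finset.range n,
      ((lp.single 2 k (1 : ℂ) : lp (fun _ : ℕ => ℂ) 2) : ℕ → ℂ) j • ψ j) atTop (𝓝 (ψ k)) := by
    apply tendsto_atTop_of_eventually_const (i₀ := k + 1)
    intro n hn
    have : ∀ j : ℕ, ((lp.single 2 k (1 : ℂ) : lp (fun _ : ℕ => ℂ) 2) : ℕ → ℂ) j • ψ j
        = if j = k then ψ k else 0 := by
      intro j
      by_cases hj : j = k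
      · subst hj; simp [lp.single_apply_self]
      · simp [lp.single_apply_ne 2 k _ hj, hj]
    simp only [this]
    rw [Finset.sum_ite_eq' (Finset.range n) k (fun _ => ψ k)]
    simp [Finset.mem_range.mpr (by omega : k < n)]
  have := hg (lp.single 2 k (1 : ℂ)) (ψ k) hts
  rw [lp.inner_single_left] at this
  simpa using this.symm

/-- For any sequence `(ψ k)` in a Hilbert space `H`, the adjoint of the synthesis operator `D`
equals the analysis operator `C` (with equality of domains): a vector `f ∈ H` belongs to
`dom D*` (i.e. there is `g ∈ ℓ²` with `⟨D c, f⟩ = ⟨c, g⟩` for all `c ∈ dom D`) if and only if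
`f ∈ dom C` (i.e. `(⟨f, ψ k⟩)_k ∈ ℓ²`), and in that case `D* f = C f`. -/
theorem stmt6 {H : Type*} [NormedAddCommGroup H] [InnerProductSpace ℂ H] [CompleteSpace H]
    (ψ : ℕ → H) (f : H) :
    ((∃ g : lp (fun _ : ℕ => ℂ) 2,
        ∀ (c : lp (fun _ : ℕ => ℂ) 2) (s : H),
          Tendsto (fun n => ∑ k ∈ Finset.range n, (c : ℕ → ℂ) k • ψ k) atTop (𝓝 s) →
          ⟪s, f⟫ = ⟪c, g⟫)
      ↔ Memℓp (fun k => ⟪ψ k, f⟫) 2)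
    ∧ (∀ g : lp (fun _ : ℕ => ℂ) 2,
        (∀ (c : lp (fun _ : ℕ => ℂ) 2) (s : H),
          Tendsto (fun n => ∑ k ∈ Finset.range n, (c : ℕ → ℂ) k • ψ k) atTop (𝓝 s) →
          ⟪s, f⟫ = ⟪c, g⟫) →
        ∀ k : ℕ, (g : ℕ → ℂ) k = ⟪ψ k, f⟫) := by
  constructor
  · constructor
    · rintro ⟨g, hg⟩
      have h2 := stmt6_aux ψ f g hg
      have : (fun k => (⟪ψ k, f⟫ : ℂ)) = ⇑g := funext fun k => (h2 k).symm
      rw [this]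
      exact lp.memℓp g
    · intro hm
      refine ⟨⟨fun k => ⟪ψ k, f⟫, hm⟩, ?_⟩
      intro c s hts
      set g : lp (fun _ : ℕ => ℂ) 2 := ⟨fun k => ⟪ψ k, f⟫, hm⟩
      have h1 : Tendsto (fun n => ⟪∑ k ∈ Finset.range n, (c : ℕ → ℂ) k • ψ k, f⟫)
          atTop (𝓝 ⟪s, f⟫) :=
        hts.inner tendsto_const_nhds
      have h2 : Tendsto (fun n => ∑ k ∈ Finset.range n, ⟪(c : ℕ → ℂ) k, (g : ℕ → ℂ) k⟫)
          atTop (𝓝 ⟪c, g⟫) := (lp.hasSum_inner c g).tendsto_sum_nat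
      have heq : ∀ n, ⟪∑ k ∈ Finset.range n, (c : ℕ → ℂ) k • ψ k, f⟫
          = ∑ k ∈ Finset.range n, ⟪(c : ℕ → ℂ) k, (g : ℕ → ℂ) k⟫ := by
        intro n
        rw [sum_inner]
        refine Finset.sum_congr rfl fun k _ => ?_
        rw [inner_smul_left]
        simp only [RCLike.inner_apply, g]; ring
      simp only [heq] at h1
      exact tendsto_nhds_unique h1 h2
  · exact fun g hg => stmt6_aux ψ f g hg
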